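/- For every positive integer n, the map R sending each 132-avoiding permutation p of length n to its rank sequence R(p) = r(p_1) r(p_2) ... r(p_n) is injective: if p and q are 132-avoiding permutations of length n with R(p) = R(q), then p = q. -/

import Mathlib

/-- `s` is (the position set of) an increasing subsequence of the permutation `p`. -/
def IncSubseq {n : ℕ} (p : Equiv.Perm (Fin n)) (s : Finset (Fin n)) : Prop :=
  ∀ a ∈ s, ∀ b ∈ s, a < b → p a < p b

/-- `p` avoids the pattern 132. -/
def Avoids132 {n : ℕ} (p : Equiv.Perm (Fin n)) : Prop :=
  ¬ ∃ i j k : Fin n, i < j ∧ j < k ∧ p i < p k ∧ p k < p j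

/-- The subsequence with position set `s` begins at position `i`. -/
def BeginsAt {n : ℕ} (s : Finset (Fin n)) (i : Fin n) : Prop :=
  i ∈ s ∧ ∀ a ∈ s, i ≤ a

/-- The rank of the entry at position `i`: the maximal length of an increasing
subsequence of `p` beginning at position `i`. -/
noncomputable def rank {n : ℕ} (p : Equiv.Perm (Fin n)) (i : Fin n) : ℕ :=
  sSup {k : ℕ | ∃ s : Finset (Fin n), IncSubseq p s ∧ BeginsAt s i ∧ s.card = k}

/-- Membership in `S n`: positive entries, consecutive decreases by at most 1,
and the last entry equals 1. -/
def InSn (n : ℕ) (t : Fin n → ℕ) : Prop :=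
  (∀ i, 1 ≤ t i) ∧
  (∀ i : ℕ, (h : i + 1 < n) → t ⟨i, Nat.lt_of_succ_lt h⟩ ≤ t ⟨i + 1, h⟩ + 1) ∧
  (∀ h : 0 < n, t ⟨n - 1, Nat.sub_lt h Nat.one_pos⟩ = 1)

/-- `p` has a unique longest increasing subsequence. -/
def HasULIS {n : ℕ} (p : Equiv.Perm (Fin n)) : Prop :=
  ∃! s : Finset (Fin n), IncSubseq p s ∧
    ∀ t : Finset (Fin n), IncSubseq p t → t.card ≤ s.card

open Finset

/-- For a 132-avoiding permutation, the rank at `i` is one more than the number of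
later positions carrying larger values. -/
lemma rank_eq_count {n : ℕ} (p : Equiv.Perm (Fin n)) (hp : Avoids132 p) (i : Fin n) :
    rank p i = (Finset.univ.filter fun j => i < j ∧ p i < p j).card + 1 := by
  classical
  set T : Finset (Fin n) := Finset.univ.filter (fun j => i < j ∧ p i < p j) with hT
  have hiT : i ∉ T := by simp [hT]
  set S : Finset (Fin n) := insert i T with hS
  have hScard : S.card = T.card + 1 := Finset.card_insert_of_notMem hiT
  have hmemS : ∀ a, a ∈ S ↔ a = i ∨ (i < a ∧ p i < p a) := by
    intro a; simp [hS, hT]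
  have hInc : IncSubseq p S := by
    intro a ha b hb hab
    rcases (hmemS a).1 ha with rfl | ⟨hia, hpa⟩
    · rcases (hmemS b).1 hb with rfl | ⟨hib, hpb⟩
      · exact absurd hab (lt_irrefl _)
      · exact hpb
    · rcases (hmemS b).1 hb with rfl | ⟨hib, hpb⟩
      · exact absurd (hia.trans hab) (lt_irrefl _)
      · by_contra hle
        push_neg at hle
        have hne : p b ≠ p a := fun e => (ne_of_lt hab) (p.injective e).symm
        have hba : p b < p a := lt_of_le_of_ne hle hne
        exact hp ⟨i, a, b, hia, hab, hpb, hba⟩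
  have hBegins : BeginsAt S i := by
    refine ⟨(hmemS i).2 (Or.inl rfl), ?_⟩
    intro a ha
    rcases (hmemS a).1 ha with rfl | ⟨hia, _⟩
    · exact le_refl _
    · exact le_of_lt hia
  have hbound : ∀ s : Finset (Fin n), IncSubseq p s → BeginsAt s i → s.card ≤ S.card := by
    intro s hs hb
    apply Finset.card_le_card
    intro a ha
    rcases eq_or_ne a i with rfl | hne
    · exact (hmemS a).2 (Or.inl rfl)
    · have hia : i < a := lt_of_le_of_ne (hb.2 a ha) (Ne.symm hne)
      exact (hmemS a).2 (Or.inr ⟨hia, hs i hb.1 a ha hia⟩)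
  have hmem : S.card ∈ {k : ℕ | ∃ s : Finset (Fin n), IncSubseq p s ∧ BeginsAt s i ∧ s.card = k} :=
    ⟨S, hInc, hBegins, rfl⟩
  have hub : S.card ∈ upperBounds
      {k : ℕ | ∃ s : Finset (Fin n), IncSubseq p s ∧ BeginsAt s i ∧ s.card = k} := by
    rintro k ⟨s, h1, h2, rfl⟩
    exact hbound s h1 h2
  have hrk : rank p i = S.card :=
    le_antisymm (csSup_le ⟨S.card, hmem⟩ hub) (le_csSup ⟨S.card, hub⟩ hmem)
  rw [hrk, hScard]

/-- Splitting a count over positions into those before and after `i`,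
provided `i` itself does not satisfy the predicate. -/
lemma split_pred {n : ℕ} (i : Fin n) (P : Fin n → Prop) [DecidablePred P] (hPi : ¬ P i) :
    (Finset.univ.filter P).card
      = (Finset.univ.filter fun j => j < i ∧ P j).card
        + (Finset.univ.filter fun j => i < j ∧ P j).card := by
  classical
  have hdisj : Disjoint (Finset.univ.filter fun j => j < i ∧ P j)
      (Finset.univ.filter fun j : Fin n => i < j ∧ P j) := by
    rw [Finset.disjoint_left]
    intro a ha hb
    simp only [Finset.mem_filter, Finset.mem_univ, true_and] at ha hb
    exact absurd (ha.1.trans hb.1) (lt_irrefl _)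
  rw [← Finset.card_union_of_disjoint hdisj]
  congr 1
  ext j
  simp only [Finset.mem_filter, Finset.mem_union, Finset.mem_univ, true_and]
  constructor
  · intro hPj
    rcases lt_trichotomy j i with hlt | rfl | hgt
    · exact Or.inl ⟨hlt, hPj⟩
    · exact absurd hPj hPi
    · exact Or.inr ⟨hgt, hPj⟩
  · rintro (⟨_, hP⟩ | ⟨_, hP⟩) <;> exact hP

/-- The number of positions whose value is below `x` is `x`. -/
lemma count_lt_val {n : ℕ} (p : Equiv.Perm (Fin n)) (x : Fin n) :
    (Finset.univ.filter fun j => p j < x).card = (x : ℕ) := by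
  classical
  rw [← Finset.card_range (x : ℕ)]
  apply Finset.card_bij (fun j _ => ((p j : ℕ)))
  · intro a ha
    simp only [Finset.mem_filter, Finset.mem_univ, true_and] at ha
    simpa using ha
  · intro a _ b _ hab
    exact p.injective (Fin.val_injective hab)
  · intro m hm
    simp only [Finset.mem_range] at hm
    have hmn : m < n := hm.trans x.isLt
    refine ⟨p.symm ⟨m, hmn⟩, ?_, ?_⟩
    · simp only [Finset.mem_filter, Finset.mem_univ, true_and, Equiv.apply_symm_apply]
      exact hm
    · simp [Equiv.apply_symm_apply]

/-- The value at position `i` equals the number of smaller values before plus after. -/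
lemma val_split {n : ℕ} (p : Equiv.Perm (Fin n)) (i : Fin n) :
    (p i : ℕ) = (Finset.univ.filter fun j => j < i ∧ p j < p i).card
      + (Finset.univ.filter fun j => i < j ∧ p j < p i).card := by
  classical
  rw [← count_lt_val p (p i)]
  exact split_pred i (fun j => p j < p i) (lt_irrefl _)

/-- Positions after `i` split according to whether the value is below or above `p i`. -/
lemma after_split {n : ℕ} (p : Equiv.Perm (Fin n)) (i : Fin n) :
    (Finset.univ.filter fun j : Fin n => i < j).card
      = (Finset.univ.filter fun j => i < j ∧ p j < p i).card
        + (Finset.univ.filter fun j => i < j ∧ p i < p j).card := by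
  classical
  have hdisj : Disjoint (Finset.univ.filter fun j => i < j ∧ p j < p i)
      (Finset.univ.filter fun j : Fin n => i < j ∧ p i < p j) := by
    rw [Finset.disjoint_left]
    intro a ha hb
    simp only [Finset.mem_filter, Finset.mem_univ, true_and] at ha hb
    exact absurd (ha.2.trans hb.2) (lt_irrefl _)
  rw [← Finset.card_union_of_disjoint hdisj]
  congr 1
  ext j
  simp only [Finset.mem_filter, Finset.mem_union, Finset.mem_univ, true_and]
  constructor
  · intro hij
    have hne : p j ≠ p i := fun e => (ne_of_gt hij) (p.injective e)
    rcases hne.lt_or_gt with hlt | hgt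
    · exact Or.inl ⟨hij, hlt⟩
    · exact Or.inr ⟨hij, hgt⟩
  · rintro (⟨hij, _⟩ | ⟨hij, _⟩) <;> exact hij

/-- Core counting contradiction used to pin down values from codes. -/
lemma count_lt_absurd {n : ℕ} (p : Equiv.Perm (Fin n)) (i x y : Fin n) (d : ℕ)
    (hx : ∀ j, j < i → p j ≠ x)
    (ex : (x : ℕ) = (Finset.univ.filter fun j => j < i ∧ p j < x).card + d)
    (ey : (y : ℕ) = (Finset.univ.filter fun j => j < i ∧ p j < y).card + d)
    (hxy : x < y) : False := by
  classical
  set A : Finset (Fin n) := Finset.univ.filter (fun j => j < i ∧ p j < x) with hA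
  set C : Finset (Fin n) := Finset.univ.filter (fun j => j < i ∧ x ≤ p j ∧ p j < y) with hC
  have hunion : (Finset.univ.filter fun j => j < i ∧ p j < y) = A ∪ C := by
    ext j
    simp only [hA, hC, Finset.mem_filter, Finset.mem_union, Finset.mem_univ, true_and]
    constructor
    · rintro ⟨hji, hjy⟩
      rcases lt_or_ge (p j) x with hl | hl
      · exact Or.inl ⟨hji, hl⟩
      · exact Or.inr ⟨hji, hl, hjy⟩
    · rintro (⟨hji, hl⟩ | ⟨hji, _, hl⟩)
      · exact ⟨hji, hl.trans hxy⟩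
      · exact ⟨hji, hl⟩
  have hdisj : Disjoint A C := by
    rw [Finset.disjoint_left]
    intro a ha hb
    simp only [hA, hC, Finset.mem_filter, Finset.mem_univ, true_and] at ha hb
    exact absurd ha.2 (not_lt_of_ge hb.2.1)
  have hCcard : C.card ≤ (y : ℕ) - (x : ℕ) - 1 := by
    have hb : C.card ≤ (Finset.Ioo (x : ℕ) (y : ℕ)).card := by
      apply Finset.card_le_card_of_injOn (fun j => (p j : ℕ))
      · intro a ha
        simp only [hC, Finset.mem_coe, Finset.mem_filter, Finset.mem_univ, true_and] at ha
        have hne : p a ≠ x := hx a ha.1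
        have h1 : x < p a := lt_of_le_of_ne ha.2.1 (Ne.symm hne)
        simp only [Finset.mem_coe, Finset.mem_Ioo]
        exact ⟨h1, ha.2.2⟩
      · intro a _ b _ hab
        exact p.injective (Fin.val_injective hab)
    simpa [Nat.card_Ioo] using hb
  have hcard : (Finset.univ.filter fun j => j < i ∧ p j < y).card = A.card + C.card := by
    rw [hunion, Finset.card_union_of_disjoint hdisj]
  have hxy' : (x : ℕ) < (y : ℕ) := hxy
  rw [hcard] at ey
  omega

/-- The rank-sequence map is injective on 132-avoiding permutations:
if two 132-avoiding permutations of length `n` have the same rank sequence, they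
are equal. -/
theorem rank_seq_injective (n : ℕ) (hn : 0 < n) (p q : Equiv.Perm (Fin n))
    (hp : Avoids132 p) (hq : Avoids132 q)
    (h : (fun i : Fin n => rank p i) = fun i : Fin n => rank q i) :
    p = q := by
  classical
  have hr : ∀ i, rank p i = rank q i := fun i => congrFun h i
  have ht : ∀ i : Fin n,
      (Finset.univ.filter fun j => i < j ∧ p i < p j).card
        = (Finset.univ.filter fun j => i < j ∧ q i < q j).card := by
    intro i
    have := hr i
    rw [rank_eq_count p hp i, rank_eq_count q hq i] at this
    omega
  have hd : ∀ i : Fin n,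
      (Finset.univ.filter fun j => i < j ∧ p j < p i).card
        = (Finset.univ.filter fun j => i < j ∧ q j < q i).card := by
    intro i
    have h1 := after_split p i
    have h2 := after_split q i
    have h3 := ht i
    omega
  have key : ∀ i : Fin n, (∀ j, j < i → p j = q j) → p i = q i := by
    intro i IH
    have e1 := val_split p i
    have e2 := val_split q i
    rw [← hd i] at e2
    have hBq : (Finset.univ.filter fun j => j < i ∧ q j < q i)
        = (Finset.univ.filter fun j => j < i ∧ p j < q i) := by
      ext j
      simp only [Finset.mem_filter, Finset.mem_univ, true_and]
      constructor
      · rintro ⟨h1, h2⟩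
        exact ⟨h1, by rw [IH j h1]; exact h2⟩
      · rintro ⟨h1, h2⟩
        exact ⟨h1, by rw [← IH j h1]; exact h2⟩
    rw [hBq] at e2
    by_contra hne
    rcases (Ne.lt_or_gt hne) with hlt | hlt
    · exact count_lt_absurd p i (p i) (q i) _
        (fun j hj e => (ne_of_lt hj) (p.injective e)) e1 e2 hlt
    · exact count_lt_absurd p i (q i) (p i) _
        (fun j hj e => by
          rw [IH j hj] at e
          exact (ne_of_lt hj) (q.injective e)) e2 e1 hlt
  have main : ∀ k : ℕ, ∀ i : Fin n, (i : ℕ) = k → p i = q i := by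
    intro k
    induction k using Nat.strong_induction_on with
    | _ k IHk =>
      intro i hik
      apply key
      intro j hj
      have hjk : (j : ℕ) < k := by
        rw [← hik]; exact hj
      exact IHk (j : ℕ) hjk j rfl
  exact Equiv.ext fun i => main (i : ℕ) i rfl
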